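/- Let n, q ∈ ℕ, let Ā ∈ ℝ^{q×q} be symmetric positive definite with inverse square root Ā^{−1/2} (the unique symmetric positive definite square root of Ā⁻¹), let ζ̄ ∈ ℝ^{q×n}, and let p : ℝⁿ × ℝⁿ → ℝ^{q}, g : ℝⁿ → ℝⁿ, λ : ℝⁿ × ℝⁿ → ℝ, and a : ℝⁿ × ℝⁿ → ℝ be functions. Suppose that for every (x, e) ∈ ℝⁿ × ℝⁿ: (i) λ(x, e) > 0, and (ii) the symmetric block matrix of size (1+n+q) given by [[a(x,e) + ⟨g(x), ζ̄ᵀ p(x,e)⟩, g(x)ᵀ, λ(x,e) (Ā^{−1/2} p(x,e))ᵀ], [g(x), −2λ(x,e) Iₙ, 0], [λ(x,e) Ā^{−1/2} p(x,e), 0, −2λ(x,e) I_q]] is negative semidefinite. Then for every matrix ζ ∈ ℝ^{q×n} of the form ζ = ζ̄ + Ā^{−1/2} Υ with ‖Υ‖ ≤ 1, and for every (x, e) ∈ ℝⁿ × ℝⁿ, one has ⟨g(x), ζᵀ p(x,e)⟩ ≤ −a(x, e). -/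

import Mathlib

open Matrix

/-- The square root of a positive semidefinite matrix, as `Matrix.PosSemidef.sqrt` was defined
in Mathlib (December 2024); it has since been removed. -/
noncomputable def Matrix.PosSemidef.sqrt {n : Type*} [Fintype n] [DecidableEq n]
    {A : Matrix n n ℝ} (hA : A.PosSemidef) : Matrix n n ℝ :=
  hA.1.eigenvectorUnitary.1 * diagonal ((↑) ∘ (√·) ∘ hA.1.eigenvalues) *
  (star hA.1.eigenvectorUnitary : Matrix n n ℝ)

private lemma opnorm_dot_bound {n q : ℕ} (Υ : Matrix (Fin q) (Fin n) ℝ)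
    (hΥ : ‖LinearMap.toContinuousLinearMap (Matrix.toEuclideanLin Υ)‖ ≤ 1)
    (v : Fin n → ℝ) :
    (Υ.mulVec v) ⬝ᵥ (Υ.mulVec v) ≤ v ⬝ᵥ v := by
  have h := (LinearMap.toContinuousLinearMap (Matrix.toEuclideanLin Υ)).le_of_opNorm_le hΥ
    ((WithLp.equiv 2 (Fin n → ℝ)).symm v)
  rw [one_mul] at h
  have h2 : (Matrix.toEuclideanLin Υ) ((WithLp.equiv 2 (Fin n → ℝ)).symm v)
      = (WithLp.equiv 2 (Fin q → ℝ)).symm (Υ.mulVec v) := rfl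
  rw [LinearMap.coe_toContinuousLinearMap'] at h
  rw [h2] at h
  have e1 : ‖(WithLp.equiv 2 (Fin q → ℝ)).symm (Υ.mulVec v)‖ ^ 2
      = (Υ.mulVec v) ⬝ᵥ (Υ.mulVec v) := by
    rw [EuclideanSpace.norm_eq, Real.sq_sqrt (Finset.sum_nonneg fun i _ => sq_nonneg _)]
    simp [dotProduct, sq]
  have e2 : ‖(WithLp.equiv 2 (Fin n → ℝ)).symm v‖ ^ 2 = v ⬝ᵥ v := by
    rw [EuclideanSpace.norm_eq, Real.sq_sqrt (Finset.sum_nonneg fun i _ => sq_nonneg _)]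
    simp [dotProduct, sq]
  calc (Υ.mulVec v) ⬝ᵥ (Υ.mulVec v) = _ ^ 2 := e1.symm
    _ ≤ _ ^ 2 := by gcongr
    _ = v ⬝ᵥ v := e2


/-- Core of Theorem 1 of the paper: if `λ(x,e) > 0` and the block matrix
`[[a(x,e) + ⟨g(x), ζ̄ᵀp(x,e)⟩, g(x)ᵀ, λ(x,e)(Ā^{-1/2}p(x,e))ᵀ],
  [g(x), -2λ(x,e)Iₙ, 0], [λ(x,e)Ā^{-1/2}p(x,e), 0, -2λ(x,e)I_q]]`
is negative semidefinite for all `(x,e)`, then for every `ζ = ζ̄ + Ā^{-1/2}Υ`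
with `‖Υ‖ ≤ 1` and all `(x,e)`, `⟨g(x), ζᵀp(x,e)⟩ ≤ -a(x,e)`. -/
theorem data_driven_iss_decrease {n q : ℕ}
    (Abar : Matrix (Fin q) (Fin q) ℝ) (hA : Abar.PosDef)
    (ζbar : Matrix (Fin q) (Fin n) ℝ)
    (p : (Fin n → ℝ) → (Fin n → ℝ) → (Fin q → ℝ))
    (g : (Fin n → ℝ) → (Fin n → ℝ))
    (lam : (Fin n → ℝ) → (Fin n → ℝ) → ℝ)
    (a : (Fin n → ℝ) → (Fin n → ℝ) → ℝ)
    (hlam : ∀ x e, 0 < lam x e)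
    (hM : ∀ x e : Fin n → ℝ,
      (-(Matrix.fromBlocks
        (Matrix.of fun (_ _ : Unit) =>
          a x e + g x ⬝ᵥ ζbarᵀ.mulVec (p x e))
        (Matrix.of fun (_ : Unit) j => Sum.elim (g x)
          (fun i => lam x e * (hA.inv.posSemidef.sqrt.mulVec (p x e)) i) j)
        (Matrix.of fun (_ : Unit) j => Sum.elim (g x)
          (fun i => lam x e * (hA.inv.posSemidef.sqrt.mulVec (p x e)) i) j)ᵀ
        (Matrix.fromBlocks
          ((-(2 * lam x e)) • (1 : Matrix (Fin n) (Fin n) ℝ)) 0 0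
          ((-(2 * lam x e)) • (1 : Matrix (Fin q) (Fin q) ℝ))))).PosSemidef) :
    ∀ Υ : Matrix (Fin q) (Fin n) ℝ,
      ‖LinearMap.toContinuousLinearMap (Matrix.toEuclideanLin Υ)‖ ≤ 1 →
        ∀ x e : Fin n → ℝ,
          g x ⬝ᵥ (ζbar + hA.inv.posSemidef.sqrt * Υ)ᵀ.mulVec (p x e)
            ≤ -a x e := by
  intro Υ hΥ x e
  have hL0 : 0 < lam x e := hlam x e
  set S := hA.inv.posSemidef.sqrt with hSdef
  set L := lam x e with hLdef
  set g' := g x with hg'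
  set v := p x e with hv
  set Sv := S.mulVec v with hSv
  set y : Fin n → ℝ := (2 * L)⁻¹ • g' with hy
  set w : Fin q → ℝ := (2 * L)⁻¹ • Υ.mulVec g' with hw
  set c : ℝ := a x e + g' ⬝ᵥ ζbarᵀ.mulVec v with hc
  set b : (Fin n ⊕ Fin q) → ℝ := Sum.elim g' (fun i => L * Sv i) with hb
  set z0 : Unit → ℝ := fun _ => 1 with hz0
  set u : (Fin n ⊕ Fin q) → ℝ := Sum.elim y w with hu
  have h := (hM x e).dotProduct_mulVec_nonneg (Sum.elim z0 u)
  rw [Matrix.neg_mulVec, dotProduct_neg] at h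
  have h' : star (Sum.elim z0 u) ⬝ᵥ
      (Matrix.fromBlocks
        (Matrix.of fun (_ _ : Unit) => c)
        (Matrix.of fun (_ : Unit) j => b j)
        (Matrix.of fun (_ : Unit) j => b j)ᵀ
        (Matrix.fromBlocks
          ((-(2 * L)) • (1 : Matrix (Fin n) (Fin n) ℝ)) 0 0
          ((-(2 * L)) • (1 : Matrix (Fin q) (Fin q) ℝ)))).mulVec (Sum.elim z0 u) ≤ 0 := by
    linarith
  rw [star_trivial, Matrix.fromBlocks_mulVec, sumElim_dotProduct_sumElim,
    dotProduct_add, dotProduct_add] at h'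
  simp only [Sum.elim_comp_inl, Sum.elim_comp_inr] at h'
  have hA1 : z0 ⬝ᵥ ((Matrix.of fun (_ _ : Unit) => c).mulVec z0) = c := by
    simp [hz0, Matrix.mulVec, dotProduct]
  have hB1 : z0 ⬝ᵥ ((Matrix.of fun (_ : Unit) j => b j).mulVec u) = b ⬝ᵥ u := by
    simp [hz0, Matrix.mulVec, dotProduct]
  have hB2 : u ⬝ᵥ ((Matrix.of fun (_ : Unit) j => b j)ᵀ.mulVec z0) = b ⬝ᵥ u := by
    simp [hz0, Matrix.mulVec, dotProduct, mul_comm]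
  have hD : u ⬝ᵥ ((Matrix.fromBlocks
          ((-(2 * L)) • (1 : Matrix (Fin n) (Fin n) ℝ)) 0 0
          ((-(2 * L)) • (1 : Matrix (Fin q) (Fin q) ℝ))).mulVec u)
      = -(2*L) * (y ⬝ᵥ y) + -(2*L) * (w ⬝ᵥ w) := by
    rw [hu, Matrix.fromBlocks_mulVec]
    simp [Matrix.smul_mulVec, Matrix.one_mulVec, Matrix.zero_mulVec, Matrix.neg_mulVec,
      sumElim_dotProduct_sumElim, dotProduct_smul, dotProduct_neg, smul_eq_mul,
      Sum.elim_comp_inl, Sum.elim_comp_inr]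
  have hbu : b ⬝ᵥ u = g' ⬝ᵥ y + L * (Sv ⬝ᵥ w) := by
    rw [hb, hu, sumElim_dotProduct_sumElim]
    congr 1
    simp [dotProduct, Finset.mul_sum, mul_assoc]
  rw [hA1, hB1, hB2, hD, hbu] at h'
  -- scalar evaluations
  have hgy : g' ⬝ᵥ y = (2*L)⁻¹ * (g' ⬝ᵥ g') := by simp [hy, dotProduct_smul, smul_eq_mul]
  have hSw : Sv ⬝ᵥ w = (2*L)⁻¹ * (Sv ⬝ᵥ Υ.mulVec g') := by
    simp [hw, dotProduct_smul, smul_eq_mul]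
  have hyy : y ⬝ᵥ y = (2*L)⁻¹ * ((2*L)⁻¹ * (g' ⬝ᵥ g')) := by
    simp [hy, dotProduct_smul, smul_dotProduct, smul_eq_mul, mul_assoc]
  have hww : w ⬝ᵥ w = (2*L)⁻¹ * ((2*L)⁻¹ * (Υ.mulVec g' ⬝ᵥ Υ.mulVec g')) := by
    simp [hw, dotProduct_smul, smul_dotProduct, smul_eq_mul, mul_assoc]
  rw [hgy, hSw, hyy, hww] at h'
  -- the goal as dot products
  have hSsym : Sᵀ = S := by
    have : S.IsHermitian := by
      rw [hSdef]; unfold Matrix.PosSemidef.sqrt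
      exact Matrix.isHermitian_mul_mul_conjTranspose _ (Matrix.isHermitian_diagonal _)
    simpa [Matrix.IsHermitian, Matrix.conjTranspose_eq_transpose_of_trivial] using this
  have hgoal : g' ⬝ᵥ (ζbar + S * Υ)ᵀ.mulVec v
      = g' ⬝ᵥ ζbarᵀ.mulVec v + Sv ⬝ᵥ Υ.mulVec g' := by
    rw [Matrix.transpose_add, Matrix.add_mulVec, dotProduct_add]
    congr 1
    rw [Matrix.transpose_mul, hSsym, ← Matrix.mulVec_mulVec, Matrix.dotProduct_mulVec,
      Matrix.vecMul_transpose, ← hSv, dotProduct_comm]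
  rw [hgoal]
  -- final arithmetic
  have hG : Υ.mulVec g' ⬝ᵥ Υ.mulVec g' ≤ g' ⬝ᵥ g' := opnorm_dot_bound Υ hΥ g'
  set G := g' ⬝ᵥ g'
  set U := Υ.mulVec g' ⬝ᵥ Υ.mulVec g'
  set T := Sv ⬝ᵥ Υ.mulVec g'
  have hne : (2:ℝ) * L ≠ 0 := by positivity
  have hinvpos : 0 < (2*L)⁻¹ := by positivity
  have e : c + ((2 * L)⁻¹ * G + L * ((2 * L)⁻¹ * T)) +
      ((2 * L)⁻¹ * G + L * ((2 * L)⁻¹ * T) +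
        (-(2 * L) * ((2 * L)⁻¹ * ((2 * L)⁻¹ * G)) +
          -(2 * L) * ((2 * L)⁻¹ * ((2 * L)⁻¹ * U))))
      = c + T + (2*L)⁻¹ * (G - U) := by
    field_simp
    ring
  rw [e] at h'
  have hnn : 0 ≤ (2*L)⁻¹ * (G - U) := mul_nonneg hinvpos.le (sub_nonneg.2 hG)
  linarith [h', hnn, hc.ge, hc.le]
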